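/- Let (T, U, Q, D) be an AGJ duality triple. If D is a definable subcategory of T, then (D, D^d) is a symmetric, product-closed duality pair on the duality triple (T, U, Q). -/

import Mathlib

open CategoryTheory CategoryTheory.Limits CategoryTheory.Pretriangulated Opposite

universe v u

namespace Paper

variable (T : Type u) [Category.{v} T]

/-- An object `C` of a category is *compact* if `Hom(C,-)` preserves set-indexed coproducts. -/
def IsCompactObj (C : T) : Prop :=
  ∀ α : Type v, Nonempty (PreservesColimitsOfShape (Discrete α) (coyoneda.obj (op C)))

section Triangulated

variable [HasZeroObject T] [Preadditive T] [HasShift T ℤ]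
  [∀ n : ℤ, (shiftFunctor T n).Additive] [Pretriangulated T]

/-- A triangulated category is *compactly generated* if it has set-indexed coproducts and
there is a set `G` of compact objects such that `X ≃ 0` iff `Hom(Σⁿ G, X) = 0` for all
`G ∈ G` and `n ∈ ℤ`. -/
structure IsCompactlyGenerated : Prop where
  hasCoproducts : ∀ α : Type v, HasColimitsOfShape (Discrete α) T
  exists_generators : ∃ G : Set T, (∀ C ∈ G, IsCompactObj T C) ∧
    ∀ X : T, (∀ C ∈ G, ∀ n : ℤ, ∀ f : C⟦n⟧ ⟶ X, f = 0) → IsZero X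

variable {T}

/-- A morphism is *phantom* if its composite with any map out of a compact object vanishes. -/
def IsPhantom {X Y : T} (f : X ⟶ Y) : Prop :=
  ∀ ⦃C : T⦄, IsCompactObj T C → ∀ g : C ⟶ X, g ≫ f = 0

/-- A triangle `X ⟶ Y ⟶ Z ⟶ ΣX` is *pure* if it is distinguished and for every compact `C`
the sequence `0 ⟶ Hom(C,X) ⟶ Hom(C,Y) ⟶ Hom(C,Z) ⟶ 0` is exact, i.e. the sequence
`0 ⟶ yX ⟶ yY ⟶ yZ ⟶ 0` is exact in `Mod-T^c`. -/
def IsPureTriangle (Tr : Triangle T) : Prop :=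
  (Tr ∈ distTriang T) ∧
  ∀ ⦃C : T⦄, IsCompactObj T C →
    (Function.Injective fun g : C ⟶ Tr.obj₁ => g ≫ Tr.mor₁) ∧
    (∀ g : C ⟶ Tr.obj₂, g ≫ Tr.mor₂ = 0 → ∃ h : C ⟶ Tr.obj₁, h ≫ Tr.mor₁ = g) ∧
    (Function.Surjective fun g : C ⟶ Tr.obj₂ => g ≫ Tr.mor₂)

/-- A morphism is a *pure monomorphism* if it appears as the first map of a pure triangle. -/
def IsPureMono {X Y : T} (f : X ⟶ Y) : Prop :=
  ∃ (Z : T) (g : Y ⟶ Z) (h : Z ⟶ X⟦(1:ℤ)⟧), IsPureTriangle (Triangle.mk f g h)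

/-- A morphism is a *pure epimorphism* if it appears as the second map of a pure triangle. -/
def IsPureEpi {Y Z : T} (g : Y ⟶ Z) : Prop :=
  ∃ (X : T) (f : X ⟶ Y) (h : Z ⟶ X⟦(1:ℤ)⟧), IsPureTriangle (Triangle.mk f g h)

/-- An object `X` is *pure injective* if every phantom map into `X` is zero
(equivalently, `yX` is injective in `Mod-T^c`). -/
def IsPureInjective (X : T) : Prop :=
  ∀ ⦃Y : T⦄ (f : Y ⟶ X), IsPhantom f → f = 0

end Triangulated

section DualityTriple

variable (U : Type u) [Category.{v} U]
variable [HasZeroObject T] [Preadditive T] [HasShift T ℤ]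
  [∀ n : ℤ, (shiftFunctor T n).Additive] [Pretriangulated T]
variable [HasZeroObject U] [Preadditive U] [HasShift U ℤ]
  [∀ n : ℤ, (shiftFunctor U n).Additive] [Pretriangulated U]

/-- A *duality triple* `(T, U, Q)` consists of compactly generated triangulated categories
`T` and `U` together with exact functors `Q : Tᵒᵖ ⥤ U` and `Q : Uᵒᵖ ⥤ T` such that
(1) `Q X` is pure injective for all `X`;
(2) there is a natural pure monomorphism `i_X : X ⟶ Q²X` for all `X`;
(3) `Q(i_X) ∘ i_{Q X} = id`;
(4) `Q` sends set-indexed coproducts to products. -/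
structure DualityTriple where
  /-- The contravariant functor `Q : Tᵒᵖ ⥤ U`. -/
  QT : Tᵒᵖ ⥤ U
  /-- The contravariant functor `Q : Uᵒᵖ ⥤ T`. -/
  QU : Uᵒᵖ ⥤ T
  cgT : IsCompactlyGenerated T
  cgU : IsCompactlyGenerated U
  QT_additive : QT.Additive
  QU_additive : QU.Additive
  /-- `Q : Tᵒᵖ ⥤ U` is exact: it sends distinguished triangles to distinguished triangles. -/
  QT_exact : ∀ Tr ∈ distTriang T, ∃ h : QT.obj (op Tr.obj₁) ⟶ (QT.obj (op Tr.obj₃))⟦(1:ℤ)⟧,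
    Triangle.mk (QT.map Tr.mor₂.op) (QT.map Tr.mor₁.op) h ∈ distTriang U
  QU_exact : ∀ Tr ∈ distTriang U, ∃ h : QU.obj (op Tr.obj₁) ⟶ (QU.obj (op Tr.obj₃))⟦(1:ℤ)⟧,
    Triangle.mk (QU.map Tr.mor₂.op) (QU.map Tr.mor₁.op) h ∈ distTriang T
  QT_pureInjective : ∀ X : T, IsPureInjective (QT.obj (op X))
  QU_pureInjective : ∀ Y : U, IsPureInjective (QU.obj (op Y))
  /-- the natural transformation `i : X ⟶ Q²X` -/
  i : 𝟭 T ⟶ QT.rightOp ⋙ QU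
  /-- the natural transformation `i : Y ⟶ Q²Y` -/
  j : 𝟭 U ⟶ QU.rightOp ⋙ QT
  i_pureMono : ∀ X : T, IsPureMono (i.app X)
  j_pureMono : ∀ Y : U, IsPureMono (j.app Y)
  Qi : ∀ X : T, j.app (QT.obj (op X)) ≫ QT.map (i.app X).op = 𝟙 (QT.obj (op X))
  Qj : ∀ Y : U, i.app (QU.obj (op Y)) ≫ QU.map (j.app Y).op = 𝟙 (QU.obj (op Y))
  /-- `Q(⊕ᵢ Xᵢ) ≅ ∏ᵢ Q(Xᵢ)`: `Q` sends coproducts to products. -/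
  QT_coproductsToProducts :
    ∀ ⦃α : Type v⦄ (X : α → T) (c : Cofan X), Nonempty (IsColimit c) →
      Nonempty (IsLimit (Fan.mk (QT.obj (op c.pt)) fun a => QT.map (c.inj a).op))
  QU_coproductsToProducts :
    ∀ ⦃α : Type v⦄ (X : α → U) (c : Cofan X), Nonempty (IsColimit c) →
      Nonempty (IsLimit (Fan.mk (QU.obj (op c.pt)) fun a => QU.map (c.inj a).op))

end DualityTriple

section Classes

variable {C : Type u} [Category.{v} C]

/-- A class of objects is closed under retracts. -/
def ClosedUnderRetracts (A : Set C) : Prop :=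
  ∀ ⦃X : C⦄, X ∈ A → ∀ ⦃Y : C⦄, (∃ (s : Y ⟶ X) (r : X ⟶ Y), s ≫ r = 𝟙 Y) → Y ∈ A

/-- A class of objects is closed under finite coproducts. -/
def ClosedUnderFiniteCoproducts (A : Set C) : Prop :=
  ∀ ⦃X Y : C⦄, X ∈ A → Y ∈ A → ∀ c : BinaryCofan X Y, Nonempty (IsColimit c) → c.pt ∈ A

/-- A class of objects is closed under set-indexed products. -/
def ClosedUnderProducts (A : Set C) : Prop :=
  ∀ ⦃α : Type v⦄ (X : α → C), (∀ a, X a ∈ A) → ∀ c : Fan X, Nonempty (IsLimit c) → c.pt ∈ A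

/-- A class of objects is closed under set-indexed coproducts. -/
def ClosedUnderCoproducts (A : Set C) : Prop :=
  ∀ ⦃α : Type v⦄ (X : α → C), (∀ a, X a ∈ A) → ∀ c : Cofan X, Nonempty (IsColimit c) → c.pt ∈ A

/-- A class of objects is closed under isomorphisms. -/
def ClosedUnderIso (A : Set C) : Prop :=
  ∀ ⦃X : C⦄, X ∈ A → ∀ ⦃Y : C⦄, Nonempty (X ≅ Y) → Y ∈ A

end Classes

section TriangulatedClasses

variable {T} [HasZeroObject T] [Preadditive T] [HasShift T ℤ]
  [∀ n : ℤ, (shiftFunctor T n).Additive] [Pretriangulated T]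

/-- A class of objects is closed under extensions (triangles). -/
def ClosedUnderExtensions (A : Set T) : Prop :=
  ∀ Tr ∈ distTriang T, Tr.obj₁ ∈ A → Tr.obj₃ ∈ A → Tr.obj₂ ∈ A

/-- A class of objects is *triangulated* if it is closed under isomorphisms, shifts
(in both directions) and triangles. -/
def IsTriangulatedClass (A : Set T) : Prop :=
  ClosedUnderIso A ∧ (∀ X ∈ A, X⟦(1:ℤ)⟧ ∈ A) ∧ (∀ X ∈ A, X⟦(-1:ℤ)⟧ ∈ A) ∧
    ClosedUnderExtensions A

/-- A class of objects is closed under pure subobjects. -/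
def ClosedUnderPureSubobjects (A : Set T) : Prop :=
  ∀ ⦃X Y : T⦄ (f : X ⟶ Y), IsPureMono f → Y ∈ A → X ∈ A

/-- A class of objects is closed under pure quotients. -/
def ClosedUnderPureQuotients (A : Set T) : Prop :=
  ∀ ⦃Y Z : T⦄ (g : Y ⟶ Z), IsPureEpi g → Y ∈ A → Z ∈ A

/-- A class of objects is closed under pure extensions. -/
def ClosedUnderPureExtensions (A : Set T) : Prop :=
  ∀ Tr : Triangle T, IsPureTriangle Tr → Tr.obj₁ ∈ A → Tr.obj₃ ∈ A → Tr.obj₂ ∈ A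

end TriangulatedClasses

section DualityPairs

variable {T} {U : Type u} [Category.{v} U]
variable [HasZeroObject T] [Preadditive T] [HasShift T ℤ]
  [∀ n : ℤ, (shiftFunctor T n).Additive] [Pretriangulated T]
variable [HasZeroObject U] [Preadditive U] [HasShift U ℤ]
  [∀ n : ℤ, (shiftFunctor U n).Additive] [Pretriangulated U]

/-- A pair of classes `(A, B)` is a *duality pair* with respect to a contravariant functor
`Q : Tᵒᵖ ⥤ U` if `X ∈ A ↔ Q X ∈ B` and `B` is closed under finite coproducts and retracts. -/
def IsDualityPairFor (Q : Tᵒᵖ ⥤ U) (A : Set T) (B : Set U) : Prop :=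
  (∀ X : T, X ∈ A ↔ Q.obj (op X) ∈ B) ∧
    ClosedUnderFiniteCoproducts B ∧ ClosedUnderRetracts B

/-- A *duality pair* on a duality triple `(T, U, Q)`. -/
def IsDualityPair (D : DualityTriple T U) (A : Set T) (B : Set U) : Prop :=
  IsDualityPairFor D.QT A B

/-- A duality pair is *symmetric* if `(B, A)` is also a duality pair. -/
def IsSymmetricDualityPair (D : DualityTriple T U) (A : Set T) (B : Set U) : Prop :=
  IsDualityPairFor D.QT A B ∧ IsDualityPairFor D.QU B A

end DualityPairs

end Paper

namespace Paper

section Definable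

variable {T : Type u} [Category.{v} T]

/-- The full subcategory `T^c ⊆ T` of compact objects. -/
abbrev CompactObjects (T : Type u) [Category.{v} T] :=
  ObjectProperty.FullSubcategory (fun C : T => IsCompactObj T C)

/-- A set of morphisms between compact objects of `T`. -/
structure CompactMorphismFamily (T : Type u) [Category.{v} T] where
  ι : Type v
  src : ι → CompactObjects T
  tgt : ι → CompactObjects T
  f : ∀ i, src i ⟶ tgt i

/-- The subcategory defined by a set `Φ = {fᵢ : Aᵢ ⟶ Bᵢ}` of morphisms between compact
objects: `{X ∈ T : Hom_T(fᵢ, X) is surjective for all i}`. -/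
def DefinedBy (Φ : CompactMorphismFamily T) : Set T :=
  {X : T | ∀ i, Function.Surjective fun g : (Φ.tgt i).obj ⟶ X =>
    (ObjectProperty.ι _).map (Φ.f i) ≫ g}

/-- A class `D ⊆ T` is *definable* if it is defined by some set of morphisms between
compact objects. -/
def IsDefinable (D : Set T) : Prop :=
  ∃ Φ : CompactMorphismFamily T, D = DefinedBy Φ

end Definable

end Paper

namespace Paper

/-- The abelian group `ℚ/ℤ`. -/
abbrev QmodZ : Type := AddCircle (1 : ℚ)

section Hom

variable {C : Type u} [Category.{v} C] [Preadditive C]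

/-- Postcomposition with a morphism, as a homomorphism of Hom-groups. -/
def postcompHom {X X' : C} (W : C) (h : X ⟶ X') : (W ⟶ X) →+ (W ⟶ X') :=
  AddMonoidHom.mk' (fun g => g ≫ h) fun a b => by simp [Preadditive.add_comp]

/-- Precomposition with a morphism, as a homomorphism of Hom-groups. -/
def precompHom {W W' : C} (X : C) (g : W' ⟶ W) : (W ⟶ X) →+ (W' ⟶ X) :=
  AddMonoidHom.mk' (fun f => g ≫ f) fun a b => by simp [Preadditive.comp_add]

end Hom

section AGJ

variable (T U : Type u) [Category.{v} T] [Category.{v} U]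
  [HasZeroObject T] [Preadditive T] [HasShift T ℤ]
  [∀ n : ℤ, (shiftFunctor T n).Additive] [Pretriangulated T]
  [HasZeroObject U] [Preadditive U] [HasShift U ℤ]
  [∀ n : ℤ, (shiftFunctor U n).Additive] [Pretriangulated U]

/-- An *Auslander-Gruson-Jensen duality triple* `(T, U, Q, D)` is a duality triple
`(T, U, Q)` together with functors `D : (T^c)ᵒᵖ ⥤ U^c` and `D : (U^c)ᵒᵖ ⥤ T^c` forming an
(adjoint) equivalence of categories, such that there are isomorphisms
`Hom_T(C, X)⁺ ≅ Hom_U(DC, QX)` and `Hom_U(C', Y)⁺ ≅ Hom_T(DC', QY)`, natural in both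
variables, where `(-)⁺ = Hom_ℤ(-, ℚ/ℤ)` is the character dual. -/
structure AGJDualityTriple extends DualityTriple T U where
  DT : (CompactObjects T)ᵒᵖ ⥤ CompactObjects U
  DU : (CompactObjects U)ᵒᵖ ⥤ CompactObjects T
  equivT : Nonempty (DT.rightOp ⋙ DU ≅ 𝟭 (CompactObjects T))
  equivU : Nonempty (DU.rightOp ⋙ DT ≅ 𝟭 (CompactObjects U))
  eT : ∀ (C : CompactObjects T) (X : T),
    ((C.obj ⟶ X) →+ QmodZ) ≃+ ((DT.obj (op C)).obj ⟶ toDualityTriple.QT.obj (op X))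
  eT_natX : ∀ (C : CompactObjects T) ⦃X X' : T⦄ (h : X ⟶ X')
      (φ : (C.obj ⟶ X') →+ QmodZ),
    eT C X (φ.comp (postcompHom C.obj h)) = eT C X' φ ≫ toDualityTriple.QT.map h.op
  eT_natC : ∀ ⦃C C' : CompactObjects T⦄ (g : C' ⟶ C) (X : T)
      (φ : (C'.obj ⟶ X) →+ QmodZ),
    eT C X (φ.comp (precompHom X
        ((ObjectProperty.ι (fun Z : T => IsCompactObj T Z)).map g))) =
      (ObjectProperty.ι (fun Z : U => IsCompactObj U Z)).map (DT.map g.op) ≫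
        eT C' X φ
  eU : ∀ (C' : CompactObjects U) (Y : U),
    ((C'.obj ⟶ Y) →+ QmodZ) ≃+ ((DU.obj (op C')).obj ⟶ toDualityTriple.QU.obj (op Y))
  eU_natX : ∀ (C' : CompactObjects U) ⦃Y Y' : U⦄ (h : Y ⟶ Y')
      (φ : (C'.obj ⟶ Y') →+ QmodZ),
    eU C' Y (φ.comp (postcompHom C'.obj h)) = eU C' Y' φ ≫ toDualityTriple.QU.map h.op
  eU_natC : ∀ ⦃C' C'' : CompactObjects U⦄ (g : C'' ⟶ C') (Y : U)
      (φ : (C''.obj ⟶ Y) →+ QmodZ),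
    eU C' Y (φ.comp (precompHom Y
        ((ObjectProperty.ι (fun Z : U => IsCompactObj U Z)).map g))) =
      (ObjectProperty.ι (fun Z : T => IsCompactObj T Z)).map (DU.map g.op) ≫
        eU C'' Y φ

variable {T U}

/-- The *dual definable subcategory* of `U` associated with a set `Φ` of morphisms between
compact objects of `T` (defining the definable subcategory `DefinedBy Φ` of `T`):
`{Y ∈ U : Ker Hom_U(Dfᵢ, Y) = 0 for all i}`. -/
def DualDefinedByT (A : AGJDualityTriple T U) (Φ : CompactMorphismFamily T) : Set U :=
  {Y : U | ∀ i, Function.Injective fun g : (A.DT.obj (op (Φ.src i))).obj ⟶ Y =>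
    (ObjectProperty.ι (fun Z : U => IsCompactObj U Z)).map (A.DT.map (Φ.f i).op) ≫ g}

/-- The dual definable subcategory of `T` associated with a set of morphisms between
compact objects of `U`. -/
def DualDefinedByU (A : AGJDualityTriple T U) (Ψ : CompactMorphismFamily U) : Set T :=
  {X : T | ∀ i, Function.Injective fun g : (A.DU.obj (op (Ψ.src i))).obj ⟶ X =>
    (ObjectProperty.ι (fun Z : T => IsCompactObj T Z)).map (A.DU.map (Ψ.f i).op) ≫ g}

end AGJ

end Paper

namespace Paper

section AuxChar

variable {G H : Type v} [AddCommGroup G] [AddCommGroup H]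

/-- The character dual of an injective map is surjective and conversely. -/
lemma aux_dual_comp_surjective_iff (f : G →+ H) :
    Function.Surjective (fun φ : H →+ QmodZ => φ.comp f) ↔ Function.Injective f := by
  constructor
  · intro h a a' hab
    by_contra hne
    have h0 : a - a' ≠ 0 := sub_ne_zero.mpr hne
    obtain ⟨c, hc⟩ := CharacterModule.exists_character_apply_ne_zero_of_ne_zero h0
    obtain ⟨φ, hφ⟩ := h (c : G →+ QmodZ)
    apply hc
    have h1 : (c : G →+ QmodZ) (a - a') = φ (f (a - a')) := by
      rw [← hφ]; rfl
    have h2 : f (a - a') = 0 := by rw [map_sub, hab, sub_self]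
    calc c (a - a') = φ (f (a - a')) := h1
      _ = φ 0 := by rw [h2]
      _ = 0 := map_zero φ
  · intro hf ψ
    obtain ⟨c, hc⟩ :=
      CharacterModule.dual_surjective_of_injective f.toIntLinearMap hf (ψ : CharacterModule G)
    refine ⟨(c : H →+ QmodZ), ?_⟩
    ext x
    exact DFunLike.congr_fun hc x

/-- The character dual of a surjective map is injective and conversely. -/
lemma aux_dual_comp_injective_iff (f : G →+ H) :
    Function.Injective (fun φ : H →+ QmodZ => φ.comp f) ↔ Function.Surjective f := by
  constructor
  · intro h
    by_contra hs
    obtain ⟨b, hb⟩ := not_forall.mp hs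
    have hbK : (QuotientAddGroup.mk' f.range) b ≠ 0 := by
      intro h0
      rw [QuotientAddGroup.mk'_apply, QuotientAddGroup.eq_zero_iff] at h0
      obtain ⟨a, ha⟩ := h0
      exact hb ⟨a, ha⟩
    obtain ⟨c, hc⟩ := CharacterModule.exists_character_apply_ne_zero_of_ne_zero hbK
    have hzero : ((c : (H ⧸ f.range) →+ QmodZ).comp (QuotientAddGroup.mk' f.range)).comp f =
        (0 : H →+ QmodZ).comp f := by
      ext x
      have : (QuotientAddGroup.mk' f.range) (f x) = 0 := by
        rw [QuotientAddGroup.mk'_apply, QuotientAddGroup.eq_zero_iff]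
        exact ⟨x, rfl⟩
      show c ((QuotientAddGroup.mk' f.range) (f x)) = 0
      rw [this, map_zero]
    have heq := h hzero
    apply hc
    have := DFunLike.congr_fun heq b
    exact this
  · intro hf φ ψ hcomp
    ext y
    obtain ⟨x, rfl⟩ := hf y
    exact DFunLike.congr_fun hcomp x

/-- Transfer of injectivity across bijections forming a commuting square. -/
lemma aux_injective_transfer {G₁ G₂ H₁ H₂ : Type*} (e₁ : G₁ ≃ G₂) (e₂ : H₁ ≃ H₂)
    {u : G₁ → H₁} {v : G₂ → H₂} (h : ∀ x, e₂ (u x) = v (e₁ x)) :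
    Function.Injective u ↔ Function.Injective v := by
  constructor
  · intro hu a b hab
    apply e₁.symm.injective
    apply hu
    apply e₂.injective
    rw [h, h, e₁.apply_symm_apply, e₁.apply_symm_apply, hab]
  · intro hv a b hab
    apply e₁.injective
    apply hv
    rw [← h, ← h, hab]

/-- Transfer of surjectivity across bijections forming a commuting square. -/
lemma aux_surjective_transfer {G₁ G₂ H₁ H₂ : Type*} (e₁ : G₁ ≃ G₂) (e₂ : H₁ ≃ H₂)
    {u : G₁ → H₁} {v : G₂ → H₂} (h : ∀ x, e₂ (u x) = v (e₁ x)) :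
    Function.Surjective u ↔ Function.Surjective v := by
  constructor
  · intro hu c
    obtain ⟨a, ha⟩ := hu (e₂.symm c)
    exact ⟨e₁ a, by rw [← h, ha, e₂.apply_symm_apply]⟩
  · intro hv c
    obtain ⟨a₂, ha⟩ := hv (e₂ c)
    refine ⟨e₁.symm a₂, e₂.injective ?_⟩
    rw [h, e₁.apply_symm_apply, ha]

end AuxChar

section AuxCat

variable {C : Type u} [Category.{v} C]

lemma aux_surj_retract {A B : C} (h : A ⟶ B) {X X' : C} (s : X' ⟶ X) (r : X ⟶ X')
    (hsr : s ≫ r = 𝟙 X')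
    (hX : Function.Surjective fun g : B ⟶ X => h ≫ g) :
    Function.Surjective fun g : B ⟶ X' => h ≫ g := by
  intro k
  obtain ⟨g, hg⟩ := hX (k ≫ s)
  refine ⟨g ≫ r, ?_⟩
  show h ≫ g ≫ r = k
  rw [← Category.assoc]
  show (fun g : B ⟶ X => h ≫ g) g ≫ r = k
  rw [hg, Category.assoc, hsr, Category.comp_id]

lemma aux_inj_retract {A B : C} (h : A ⟶ B) {X X' : C} (s : X' ⟶ X) (r : X ⟶ X')
    (hsr : s ≫ r = 𝟙 X')
    (hX : Function.Injective fun g : B ⟶ X => h ≫ g) :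
    Function.Injective fun g : B ⟶ X' => h ≫ g := by
  intro g₁ g₂ hg
  have h1 : (fun g : B ⟶ X => h ≫ g) (g₁ ≫ s) = (fun g : B ⟶ X => h ≫ g) (g₂ ≫ s) := by
    show h ≫ g₁ ≫ s = h ≫ g₂ ≫ s
    rw [← Category.assoc, ← Category.assoc]
    exact congrArg (· ≫ s) hg
  have h2 := hX h1
  calc g₁ = (g₁ ≫ s) ≫ r := by rw [Category.assoc, hsr, Category.comp_id]
    _ = (g₂ ≫ s) ≫ r := by rw [h2]
    _ = g₂ := by rw [Category.assoc, hsr, Category.comp_id]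

lemma aux_surj_prod {A B : C} (h : A ⟶ B) {α : Type v} (X : α → C) (c : Fan X)
    (hc : IsLimit c)
    (hX : ∀ a, Function.Surjective fun g : B ⟶ X a => h ≫ g) :
    Function.Surjective fun g : B ⟶ c.pt => h ≫ g := by
  intro k
  choose g hg using fun a => hX a (k ≫ c.proj a)
  refine ⟨hc.lift (Fan.mk B g), hc.hom_ext fun j => ?_⟩
  obtain ⟨a⟩ := j
  show (h ≫ hc.lift (Fan.mk B g)) ≫ c.π.app ⟨a⟩ = k ≫ c.π.app ⟨a⟩
  rw [Category.assoc, hc.fac]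
  exact hg a

lemma aux_cofan_total [Preadditive C] {X Y : C} (c : BinaryCofan X Y) (hc : IsColimit c) :
    ∃ (p : c.pt ⟶ X) (q : c.pt ⟶ Y),
      (p ≫ c.inl : c.pt ⟶ c.pt) + (q ≫ c.inr : c.pt ⟶ c.pt) = 𝟙 c.pt := by
  have hb := CategoryTheory.Limits.IsBilimit.binary_total
    (binaryBiconeIsBilimitOfColimitCoconeOfIsColimit hc)
  exact ⟨_, _, hb⟩

lemma aux_surj_binary [Preadditive C] {A B : C} (h : A ⟶ B) {X Y : C}
    (c : BinaryCofan X Y) (hc : IsColimit c)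
    (hX : Function.Surjective fun g : B ⟶ X => h ≫ g)
    (hY : Function.Surjective fun g : B ⟶ Y => h ≫ g) :
    Function.Surjective fun g : B ⟶ c.pt => h ≫ g := by
  obtain ⟨p, q, htot⟩ := aux_cofan_total c hc
  intro k
  obtain ⟨g₁, hg₁⟩ := hX (k ≫ p)
  obtain ⟨g₂, hg₂⟩ := hY (k ≫ q)
  have hg₁' : h ≫ g₁ = k ≫ p := hg₁
  have hg₂' : h ≫ g₂ = k ≫ q := hg₂
  refine ⟨(g₁ ≫ c.inl : B ⟶ c.pt) + (g₂ ≫ c.inr : B ⟶ c.pt), ?_⟩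
  show h ≫ ((g₁ ≫ c.inl : B ⟶ c.pt) + (g₂ ≫ c.inr : B ⟶ c.pt)) = k
  erw [Preadditive.comp_add, ← Category.assoc, ← Category.assoc, hg₁', hg₂',
    Category.assoc, Category.assoc, ← Preadditive.comp_add, htot, Category.comp_id]

lemma aux_inj_binary [Preadditive C] {A B : C} (h : A ⟶ B) {X Y : C}
    (c : BinaryCofan X Y) (hc : IsColimit c)
    (hX : Function.Injective fun g : B ⟶ X => h ≫ g)
    (hY : Function.Injective fun g : B ⟶ Y => h ≫ g) :
    Function.Injective fun g : B ⟶ c.pt => h ≫ g := by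
  obtain ⟨p, q, htot⟩ := aux_cofan_total c hc
  intro g₁ g₂ hg
  have hg' : h ≫ g₁ = h ≫ g₂ := hg
  have h1 : g₁ ≫ p = g₂ ≫ p := by
    apply hX
    show h ≫ g₁ ≫ p = h ≫ g₂ ≫ p
    rw [← Category.assoc, ← Category.assoc, hg']
  have h2 : g₁ ≫ q = g₂ ≫ q := by
    apply hY
    show h ≫ g₁ ≫ q = h ≫ g₂ ≫ q
    rw [← Category.assoc, ← Category.assoc, hg']
  calc g₁ = g₁ ≫ ((p ≫ c.inl : c.pt ⟶ c.pt) + (q ≫ c.inr : c.pt ⟶ c.pt)) := by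
        rw [htot, Category.comp_id]
    _ = ((g₁ ≫ p) ≫ c.inl : B ⟶ c.pt) + ((g₁ ≫ q) ≫ c.inr : B ⟶ c.pt) := by
        erw [Preadditive.comp_add, Category.assoc, Category.assoc]
    _ = ((g₂ ≫ p) ≫ c.inl : B ⟶ c.pt) + ((g₂ ≫ q) ≫ c.inr : B ⟶ c.pt) := by
        rw [h1, h2]
    _ = g₂ ≫ ((p ≫ c.inl : c.pt ⟶ c.pt) + (q ≫ c.inr : c.pt ⟶ c.pt)) := by
        erw [Preadditive.comp_add, Category.assoc, Category.assoc]
    _ = g₂ := by rw [htot, Category.comp_id]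

lemma aux_surj_precomp_iso {P₁ P₂ C₁ C₂ X : C} (u : P₁ ⟶ P₂) (f : C₁ ⟶ C₂)
    (e₁ : P₁ ≅ C₁) (e₂ : P₂ ≅ C₂) (hcomm : u ≫ e₂.hom = e₁.hom ≫ f) :
    (Function.Surjective fun g : P₂ ⟶ X => u ≫ g) ↔
      (Function.Surjective fun g : C₂ ⟶ X => f ≫ g) := by
  have hf : f = e₁.inv ≫ u ≫ e₂.hom := by
    rw [hcomm, ← Category.assoc, e₁.inv_hom_id, Category.id_comp]
  constructor
  · intro hu k
    obtain ⟨g, hg⟩ := hu (e₁.hom ≫ k)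
    have hg' : u ≫ g = e₁.hom ≫ k := hg
    refine ⟨e₂.inv ≫ g, ?_⟩
    show f ≫ e₂.inv ≫ g = k
    calc f ≫ e₂.inv ≫ g = (e₁.inv ≫ u ≫ e₂.hom) ≫ e₂.inv ≫ g := by rw [hf]
      _ = e₁.inv ≫ u ≫ e₂.hom ≫ e₂.inv ≫ g := by simp only [Category.assoc]
      _ = e₁.inv ≫ u ≫ g := by rw [e₂.hom_inv_id_assoc]
      _ = e₁.inv ≫ e₁.hom ≫ k := by rw [hg']
      _ = k := by rw [e₁.inv_hom_id_assoc]
  · intro hv k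
    obtain ⟨g, hg⟩ := hv (e₁.inv ≫ k)
    have hg' : f ≫ g = e₁.inv ≫ k := hg
    refine ⟨e₂.hom ≫ g, ?_⟩
    show u ≫ e₂.hom ≫ g = k
    calc u ≫ e₂.hom ≫ g = (u ≫ e₂.hom) ≫ g := by rw [Category.assoc]
      _ = (e₁.hom ≫ f) ≫ g := by rw [hcomm]
      _ = e₁.hom ≫ f ≫ g := by rw [Category.assoc]
      _ = e₁.hom ≫ e₁.inv ≫ k := by rw [hg']
      _ = k := by rw [e₁.hom_inv_id_assoc]

end AuxCat

/-- Let `(T, U, Q, D)` be an AGJ duality triple. If `D` is a definable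
subcategory of `T` (defined by a set `Φ` of morphisms between compact objects), then
`(D, D^d)` is a symmetric, product-closed duality pair on the duality triple `(T, U, Q)`,
where `D^d` is the dual definable subcategory determined by `Φ` via AGJ duality. -/
theorem definable_gives_symmetric_duality_pair
    {T U : Type u} [Category.{v} T] [Category.{v} U]
    [HasZeroObject T] [Preadditive T] [HasShift T ℤ]
    [∀ n : ℤ, (shiftFunctor T n).Additive] [Pretriangulated T]
    [HasZeroObject U] [Preadditive U] [HasShift U ℤ]
    [∀ n : ℤ, (shiftFunctor U n).Additive] [Pretriangulated U]
    (A : AGJDualityTriple T U) (Φ : CompactMorphismFamily T) :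
    IsDualityPairFor A.toDualityTriple.QT (DefinedBy Φ) (DualDefinedByT A Φ) ∧
    IsDualityPairFor A.toDualityTriple.QU (DualDefinedByT A Φ) (DefinedBy Φ) ∧
    ClosedUnderProducts (DefinedBy Φ) := by
  -- Part 1: `X ∈ D ↔ Q X ∈ D^d`, via the AGJ character duality `eT`.
  have piece1 : ∀ (X : T) (i : Φ.ι),
      (Function.Surjective fun g : (Φ.tgt i).obj ⟶ X =>
        (ObjectProperty.ι _).map (Φ.f i) ≫ g) ↔
      (Function.Injective fun g : (A.DT.obj (op (Φ.src i))).obj ⟶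
          A.toDualityTriple.QT.obj (op X) =>
        (ObjectProperty.ι (fun Z : U => IsCompactObj U Z)).map
          (A.DT.map (Φ.f i).op) ≫ g) := by
    intro X i
    have step1 := (aux_dual_comp_injective_iff
      (precompHom X ((ObjectProperty.ι
        (fun Z : T => IsCompactObj T Z)).map (Φ.f i)))).symm
    have step2 := aux_injective_transfer (A.eT (Φ.src i) X).toEquiv
      (A.eT (Φ.tgt i) X).toEquiv (fun φ => A.eT_natC (Φ.f i) X φ)
    exact step1.trans step2
  -- Part 2: `Y ∈ D^d ↔ Q Y ∈ D`, via `eU` and the equivalence `DU ∘ DT ≅ 𝟭`.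
  have piece2 : ∀ (Y : U) (i : Φ.ι),
      (Function.Injective fun g : (A.DT.obj (op (Φ.src i))).obj ⟶ Y =>
        (ObjectProperty.ι (fun Z : U => IsCompactObj U Z)).map
          (A.DT.map (Φ.f i).op) ≫ g) ↔
      (Function.Surjective fun g : (Φ.tgt i).obj ⟶ A.toDualityTriple.QU.obj (op Y) =>
        (ObjectProperty.ι _).map (Φ.f i) ≫ g) := by
    intro Y i
    have step1 := (aux_dual_comp_surjective_iff
      (precompHom Y ((ObjectProperty.ι
        (fun Z : U => IsCompactObj U Z)).map (A.DT.map (Φ.f i).op)))).symm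
    have step2 := aux_surjective_transfer
      (A.eU (A.DT.obj (op (Φ.tgt i))) Y).toEquiv
      (A.eU (A.DT.obj (op (Φ.src i))) Y).toEquiv
      (fun φ => A.eU_natC (A.DT.map (Φ.f i).op) Y φ)
    have η := A.equivT.some
    have nat := η.hom.naturality (Φ.f i)
    have hcomm : (ObjectProperty.ι (fun Z : T => IsCompactObj T Z)).map
          (A.DU.map (A.DT.map (Φ.f i).op).op) ≫
          ((ObjectProperty.ι _).mapIso (η.app (Φ.tgt i))).hom =
        ((ObjectProperty.ι _).mapIso (η.app (Φ.src i))).hom ≫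
          (ObjectProperty.ι _).map (Φ.f i) := by
      have h2 := congrArg (fun t => (ObjectProperty.ι
        (fun Z : T => IsCompactObj T Z)).map t) nat
      simp only [Functor.map_comp] at h2
      exact h2
    have step3 := aux_surj_precomp_iso
      (X := A.toDualityTriple.QU.obj (op Y))
      ((ObjectProperty.ι (fun Z : T => IsCompactObj T Z)).map
        (A.DU.map (A.DT.map (Φ.f i).op).op))
      ((ObjectProperty.ι _).map (Φ.f i))
      ((ObjectProperty.ι _).mapIso (η.app (Φ.src i)))
      ((ObjectProperty.ι _).mapIso (η.app (Φ.tgt i))) hcomm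
    exact (step1.trans step2).trans step3
  -- Closure properties.
  have closD_retr : ClosedUnderRetracts (DefinedBy Φ) := by
    intro X hX Y hret i
    obtain ⟨s, r, hsr⟩ := hret
    exact aux_surj_retract _ s r hsr (hX i)
  have closD_bin : ClosedUnderFiniteCoproducts (DefinedBy Φ) := by
    intro X Y hX hY c hc
    obtain ⟨hc⟩ := hc
    intro i
    exact aux_surj_binary _ c hc (hX i) (hY i)
  have closDd_retr : ClosedUnderRetracts (DualDefinedByT A Φ) := by
    intro X hX Y hret i
    obtain ⟨s, r, hsr⟩ := hret
    exact aux_inj_retract _ s r hsr (hX i)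
  have closDd_bin : ClosedUnderFiniteCoproducts (DualDefinedByT A Φ) := by
    intro X Y hX hY c hc
    obtain ⟨hc⟩ := hc
    intro i
    exact aux_inj_binary _ c hc (hX i) (hY i)
  have closD_prod : ClosedUnderProducts (DefinedBy Φ) := by
    intro α X hX c hc
    obtain ⟨hc⟩ := hc
    intro i
    exact aux_surj_prod _ X c hc (fun a => hX a i)
  exact ⟨⟨fun X => forall_congr' fun i => piece1 X i, closDd_bin, closDd_retr⟩,
    ⟨fun Y => forall_congr' fun i => piece2 Y i, closD_bin, closD_retr⟩, closD_prod⟩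

end Paper
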